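/- Let V be a finite type, let T be a simple graph on V which is a tree (connected with no cycles), let W be a type, and for each pair u, v ∈ V let C u v : W → W → Prop be a constraint satisfying the symmetry condition C u v x y ↔ C v u y x for all u, v, x, y. Let B : V → Set W be a family of sets such that: (a) B v is nonempty for every v ∈ V, and (b) for every edge {u, v} of T and every x ∈ B u, there exists y ∈ B v with C u v x y. Then there exists a function f : V → W such that f v ∈ B v for all v ∈ V and C u v (f u) (f v) holds for every edge {u, v} of T. -/

import Mathlib

open SimpleGraph Classical

private lemma tree_isPath_length {V : Type*} {T : SimpleGraph V} (hT : T.IsTree)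
    {a b : V} (p : T.Walk a b) (hp : p.IsPath) : p.length = T.dist a b := by
  obtain ⟨q, hq⟩ := hT.isConnected.exists_walk_length_eq_dist a b
  have hbp : q.bypass.IsPath := q.bypass_isPath
  have hpq : p = q.bypass := by
    have := hT.IsAcyclic.path_unique ⟨p, hp⟩ ⟨q.bypass, hbp⟩
    exact congrArg Subtype.val this
  refine le_antisymm ?_ (SimpleGraph.dist_le p)
  rw [hpq, ← hq]
  exact q.length_bypass_le

private lemma isPath_concat' {V : Type*} {T : SimpleGraph V} {a b c : V}
    (p : T.Walk a b) (hp : p.IsPath) (h : T.Adj b c) (hc : c ∉ p.support) :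
    (p.concat h).IsPath := by
  rw [← SimpleGraph.Walk.isPath_reverse_iff, SimpleGraph.Walk.reverse_concat]
  exact SimpleGraph.Walk.IsPath.cons hp.reverse (by simpa using hc)

private lemma exists_parent {V : Type*} {T : SimpleGraph V} (hT : T.IsTree)
    {r v : V} (hv : v ≠ r) : ∃ u, T.Adj u v ∧ T.dist r u + 1 = T.dist r v := by
  obtain ⟨q, hq⟩ := hT.isConnected.exists_walk_length_eq_dist r v
  have hp : q.bypass.IsPath := q.bypass_isPath
  have hlen : q.bypass.length = T.dist r v := tree_isPath_length hT _ hp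
  cases hrev : q.bypass.reverse with
  | nil => exact absurd rfl hv
  | cons h w =>
    have hpe : q.bypass = w.reverse.concat h.symm := by
      have h2 := congrArg SimpleGraph.Walk.reverse hrev
      simpa [SimpleGraph.Walk.reverse_cons, SimpleGraph.Walk.concat_eq_append] using h2
    have hwp : w.reverse.IsPath := by
      rw [hpe, SimpleGraph.Walk.concat_eq_append] at hp
      exact hp.of_append_left
    refine ⟨_, h.symm, ?_⟩
    have hwl : w.reverse.length = T.dist r _ := tree_isPath_length hT _ hwp
    have h3 : q.bypass.length = w.reverse.length + 1 := by
      rw [hpe, SimpleGraph.Walk.length_concat]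
    omega

private lemma tree_adj_dist {V : Type*} {T : SimpleGraph V} (hT : T.IsTree)
    (r : V) {u v : V} (huv : T.Adj u v) :
    T.dist r v = T.dist r u + 1 ∨ T.dist r u = T.dist r v + 1 := by
  obtain ⟨q, _⟩ := hT.isConnected.exists_walk_length_eq_dist r u
  have hp : q.bypass.IsPath := q.bypass_isPath
  have hlen : q.bypass.length = T.dist r u := tree_isPath_length hT _ hp
  by_cases hv : v ∈ q.bypass.support
  · right
    have h1 := SimpleGraph.Walk.take_spec q.bypass hv
    have hlt : (q.bypass.takeUntil v hv).length = T.dist r v :=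
      tree_isPath_length hT _ (hp.takeUntil hv)
    have hld : (q.bypass.dropUntil v hv).length = 1 := by
      rw [tree_isPath_length hT _ (hp.dropUntil hv)]
      exact SimpleGraph.dist_eq_one_iff_adj.2 huv.symm
    have h2 := congrArg SimpleGraph.Walk.length h1
    rw [SimpleGraph.Walk.length_append, hlt, hld] at h2
    omega
  · left
    have h3 := tree_isPath_length hT _ (isPath_concat' q.bypass hp huv hv)
    rw [SimpleGraph.Walk.length_concat, hlen] at h3
    exact h3.symm

private lemma parent_unique {V : Type*} {T : SimpleGraph V} (hT : T.IsTree)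
    {r u u' v : V} (h : T.Adj u v) (h' : T.Adj u' v)
    (hd : T.dist r u + 1 = T.dist r v) (hd' : T.dist r u' + 1 = T.dist r v) : u = u' := by
  have build : ∀ (w : V) (hw : T.Adj w v) (hdw : T.dist r w + 1 = T.dist r v),
      ∃ (p : T.Walk r w), p.IsPath ∧ (p.concat hw).IsPath := by
    intro w hw hdw
    obtain ⟨q, _⟩ := hT.isConnected.exists_walk_length_eq_dist r w
    have hp : q.bypass.IsPath := q.bypass_isPath
    have hlen : q.bypass.length = T.dist r w := tree_isPath_length hT _ hp
    have hv : v ∉ q.bypass.support := by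
      intro hv
      have hlt : (q.bypass.takeUntil v hv).length = T.dist r v :=
        tree_isPath_length hT _ (hp.takeUntil hv)
      have := SimpleGraph.Walk.length_takeUntil_le q.bypass hv
      omega
    exact ⟨q.bypass, hp, isPath_concat' q.bypass hp hw hv⟩
  obtain ⟨p, _, hP⟩ := build u h hd
  obtain ⟨p', _, hP'⟩ := build u' h' hd'
  have heq : p.concat h = p'.concat h' := by
    have := hT.IsAcyclic.path_unique ⟨p.concat h, hP⟩ ⟨p'.concat h', hP'⟩
    exact congrArg Subtype.val this
  obtain ⟨hv, -⟩ := SimpleGraph.Walk.concat_inj heq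
  exact hv

private noncomputable def auxF {V W : Type*} (T : SimpleGraph V) (C : V → V → W → W → Prop)
    (B : V → Set W) (hne : ∀ v, (B v).Nonempty)
    (harc : ∀ u v, T.Adj u v → ∀ x ∈ B u, ∃ y ∈ B v, C u v x y)
    (r : V) : ℕ → (v : V) → {x // x ∈ B v}
  | 0, v => ⟨(hne v).some, (hne v).some_mem⟩
  | (n+1), v =>
    if h : ∃ u, T.Adj u v ∧ T.dist r u = n ∧ T.dist r v = n + 1 then
      ⟨(harc h.choose v h.choose_spec.1 (auxF T C B hne harc r n h.choose).1
          (auxF T C B hne harc r n h.choose).2).choose,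
        (harc h.choose v h.choose_spec.1 (auxF T C B hne harc r n h.choose).1
          (auxF T C B hne harc r n h.choose).2).choose_spec.1⟩
    else auxF T C B hne harc r n v

private lemma auxF_spec {V W : Type*} (T : SimpleGraph V) (C : V → V → W → W → Prop)
    (B : V → Set W) (hne : ∀ v, (B v).Nonempty)
    (harc : ∀ u v, T.Adj u v → ∀ x ∈ B u, ∃ y ∈ B v, C u v x y)
    (r : V) {n : ℕ} {v : V}
    (h : ∃ u, T.Adj u v ∧ T.dist r u = n ∧ T.dist r v = n + 1) :
    C h.choose v (auxF T C B hne harc r n h.choose).1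
      (auxF T C B hne harc r (n+1) v).1 := by
  rw [auxF, dif_pos h]
  exact (harc h.choose v h.choose_spec.1 (auxF T C B hne harc r n h.choose).1
    (auxF T C B hne harc r n h.choose).2).choose_spec.2

/-- Arc consistency for tree-structured constraint satisfaction problems: if `T` is a
tree on the finite vertex type `V`, `C` is a symmetric family of binary constraints,
and `B` assigns to each vertex a nonempty candidate set such that along every edge every
candidate value extends to a compatible candidate value at the other end, then there is
a global solution `f` choosing a candidate at each vertex and satisfying all edge
constraints. -/
theorem tree_csp_arc_consistency
    {V W : Type*} [Fintype V] (T : SimpleGraph V) (hT : T.IsTree)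
    (C : V → V → W → W → Prop)
    (hC : ∀ u v x y, C u v x y ↔ C v u y x)
    (B : V → Set W)
    (hne : ∀ v, (B v).Nonempty)
    (harc : ∀ u v, T.Adj u v → ∀ x ∈ B u, ∃ y ∈ B v, C u v x y) :
    ∃ f : V → W, (∀ v, f v ∈ B v) ∧ ∀ u v, T.Adj u v → C u v (f u) (f v) := by
  classical
  obtain ⟨r⟩ := hT.isConnected.nonempty
  refine ⟨fun v => (auxF T C B hne harc r (T.dist r v) v).1,
    fun v => (auxF T C B hne harc r (T.dist r v) v).2, ?_⟩
  have key : ∀ u v, T.Adj u v → T.dist r u + 1 = T.dist r v →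
      C u v (auxF T C B hne harc r (T.dist r u) u).1
        (auxF T C B hne harc r (T.dist r v) v).1 := by
    intro u v huv hd
    have h : ∃ u', T.Adj u' v ∧ T.dist r u' = T.dist r u ∧ T.dist r v = T.dist r u + 1 :=
      ⟨u, huv, rfl, hd.symm⟩
    have hspec := auxF_spec T C B hne harc r h
    have hcs := h.choose_spec
    have hu : h.choose = u := parent_unique hT hcs.1 huv (by omega) hd
    rw [hu] at hspec
    rw [show T.dist r v = T.dist r u + 1 from hd.symm]
    exact hspec
  intro u v huv
  rcases tree_adj_dist hT r huv with hd | hd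
  · exact key u v huv (by omega)
  · exact (hC u v _ _).2 (key v u huv.symm (by omega))
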